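/- For every h ∈ ℕ and every k ≥ 1 one has α_{k−1} · p_{k+2h+1,k−1} = d_k · Σ_{i=0}^{k−1} α_i·(1−α_{i+1})·T_{h,i+1} (equivalently, = d_k · Σ_{i=0}^{k−1} ((d_{i+1}−d_{i+2})/d_i)·T_{h,i+1}), while for k = 0 the corresponding quantity p_{2h+1,−1} is 0. -/

import Mathlib

/-- for `h ∈ ℕ` and `k ≥ 1`,
`α_{k−1} p_{k+2h+1,k−1} = d_k ∑_{i=0}^{k−1} α_i (1−α_{i+1}) T_{h,i+1}`,
equivalently `= d_k ∑_{i=0}^{k−1} ((d_{i+1}−d_{i+2})/d_i) T_{h,i+1}`.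
(For `k = 0` the corresponding quantity `p_{2h+1,−1}` is `0` by convention; with ℕ-valued
state indices this is the empty case.) -/
theorem stmt_12 (lam mu : ℕ → ℝ)
    (hlam : ∀ k : ℕ, 0 < lam k) (hmu0 : mu 0 = 0) (hmu : ∀ k : ℕ, 1 ≤ k → 0 < mu k)
    (a : ℕ → ℝ) (ha : ∀ k : ℕ, a k = lam k / (lam k + mu k))
    (d : ℕ → ℝ) (hd : ∀ k : ℕ, d k = ∏ i ∈ Finset.range k, a i)
    (p : ℕ → ℕ → ℝ)
    (hp00 : p 0 0 = 1) (hp0 : ∀ k : ℕ, 1 ≤ k → p 0 k = 0)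
    (hrec0 : ∀ n : ℕ, p (n + 1) 0 = (1 - a 1) * p n 1)
    (hreck : ∀ n k : ℕ, 1 ≤ k →
      p (n + 1) k = a (k - 1) * p n (k - 1) + (1 - a (k + 1)) * p n (k + 1))
    (T : ℕ → ℕ → ℝ)
    (hT0 : ∀ k : ℕ, T 0 k = 1)
    (hTrec : ∀ h k : ℕ, T (h + 1) k =
      ∑ l ∈ Finset.range (k + 1), a l * (1 - a (l + 1)) * T h (l + 1)) :
    ∀ h k : ℕ, 1 ≤ k →
      a (k - 1) * p (k + 2 * h + 1) (k - 1) =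
        d k * ∑ i ∈ Finset.range k, a i * (1 - a (i + 1)) * T h (i + 1) ∧
      a (k - 1) * p (k + 2 * h + 1) (k - 1) =
        d k * ∑ i ∈ Finset.range k, ((d (i + 1) - d (i + 2)) / d i) * T h (i + 1) := by
  -- basic positivity facts
  have hapos : ∀ k, 0 < a k := by
    intro k
    have hmunn : 0 ≤ mu k := by
      cases k with
      | zero => simp [hmu0]
      | succ n => exact (hmu (n+1) (Nat.succ_le_succ (Nat.zero_le n))).le
    rw [ha]
    exact div_pos (hlam k) (by linarith [hlam k])
  have hdpos : ∀ k, 0 < d k := by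
    intro k
    rw [hd]
    exact Finset.prod_pos fun i _ => hapos i
  have ha0 : a 0 = 1 := by
    rw [ha, hmu0, add_zero, div_self (hlam 0).ne']
  have hdsucc : ∀ k, d (k + 1) = d k * a k := by
    intro k; rw [hd, hd, Finset.prod_range_succ]
  have hd0 : d 0 = 1 := by simp [hd]
  have hd1 : d 1 = 1 := by rw [hdsucc, hd0, ha0, one_mul]
  -- p n k = 0 for n < k
  have pzero : ∀ n k, n < k → p n k = 0 := by
    intro n
    induction n with
    | zero => intro k hk; exact hp0 k hk
    | succ n ih =>
      intro k hk
      have hk1 : 1 ≤ k := by omega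
      rw [hreck n k hk1, ih (k - 1) (by omega), ih (k + 1) (by omega)]
      ring
  -- main lemma : p (k + 2h) k = d k * T h k
  have main : ∀ h k, p (k + 2 * h) k = d k * T h k := by
    intro h
    induction h with
    | zero =>
      intro k
      induction k with
      | zero => simp [hp00, hd0, hT0]
      | succ k ih =>
        have h1 : (k + 1 : ℕ) + 2 * 0 = (k + 2 * 0) + 1 := by ring
        rw [h1, hreck (k + 2 * 0) (k + 1) (Nat.succ_le_succ (Nat.zero_le k))]
        simp only [Nat.add_sub_cancel]
        rw [ih, pzero (k + 2 * 0) (k + 1 + 1) (by omega)]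
        rw [hdsucc, hT0, hT0]
        ring
    | succ h ihh =>
      intro k
      induction k with
      | zero =>
        have h1 : (0 : ℕ) + 2 * (h + 1) = (1 + 2 * h) + 1 := by ring
        rw [h1, hrec0 (1 + 2 * h), ihh 1, hd1, hd0, hTrec h 0]
        simp [ha0]
      | succ k ihk =>
        have h1 : (k + 1 : ℕ) + 2 * (h + 1) = (k + 2 * (h + 1)) + 1 := by ring
        rw [h1, hreck (k + 2 * (h + 1)) (k + 1) (Nat.succ_le_succ (Nat.zero_le k))]
        simp only [Nat.add_sub_cancel]
        have h2 : (k : ℕ) + 2 * (h + 1) = (k + 1 + 1) + 2 * h := by ring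
        rw [ihk, h2, ihh (k + 1 + 1)]
        have hT1 : T (h + 1) (k + 1) =
            T (h + 1) k + a (k + 1) * (1 - a (k + 1 + 1)) * T h (k + 1 + 1) := by
          rw [hTrec h (k + 1), hTrec h k, Finset.sum_range_succ]
        rw [hT1, hdsucc k, hdsucc (k + 1), hdsucc k]
        ring
  intro h k hk
  obtain ⟨m, rfl⟩ : ∃ m, k = m + 1 := ⟨k - 1, by omega⟩
  simp only [Nat.add_sub_cancel]
  have h1 : (m + 1 : ℕ) + 2 * h + 1 = m + 2 * (h + 1) := by ring
  have key : a m * p (m + 1 + 2 * h + 1) m =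
      d (m + 1) * ∑ i ∈ Finset.range (m + 1), a i * (1 - a (i + 1)) * T h (i + 1) := by
    rw [h1, main (h + 1) m, hdsucc m, ← hTrec h m]
    ring
  refine ⟨key, key.trans ?_⟩
  congr 1
  apply Finset.sum_congr rfl
  intro i _
  have : (d (i + 1) - d (i + 2)) / d i = a i * (1 - a (i + 1)) := by
    rw [hdsucc (i + 1), hdsucc i]
    field_simp [(hdpos i).ne']
  rw [this]
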